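/- Let X be a Banach space and 𝔄 a unital, norm-closed, strictly semi-transitive subalgebra of L(X). Then every 𝔄-invariant linear subspace Y of X (not assumed closed) is closed, and moreover Y = 𝔄x for some x ∈ X. -/

import Mathlib

open Metric Set Filter Topology

section aux
variable {𝕜 X : Type*} [RCLike 𝕜]
    [NormedAddCommGroup X] [NormedSpace 𝕜 X] [CompleteSpace X]

/-- Points reachable from `w` by an element of `𝔄` of norm at most `m`. -/
def ReachSet (𝔄 : Subalgebra 𝕜 (X →L[𝕜] X)) (m : ℝ) (w : X) : Set X :=
  {v | ∃ A ∈ 𝔄, ‖A‖ ≤ m ∧ A w = v}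

lemma isClosed_rel (𝔄 : Subalgebra 𝕜 (X →L[𝕜] X)) (m : ℝ) (hm : 0 ≤ m) :
    IsClosed {p : X × X | p.1 ∈ closure (ReachSet 𝔄 m p.2)} := by
  apply isClosed_of_closure_subset
  intro p hp
  rw [Set.mem_setOf_eq, Metric.mem_closure_iff]
  intro ε hε
  have hm3 : (0:ℝ) < m + 3 := by linarith
  have hε' : 0 < ε / (m + 3) := div_pos hε hm3
  rcases Metric.mem_closure_iff.1 hp _ hε' with ⟨q, hq, hdq⟩
  rcases Metric.mem_closure_iff.1 hq.out _ hε' with ⟨v, ⟨A, hA𝔄, hAn, hAv⟩, hdv⟩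
  refine ⟨A p.2, ⟨A, hA𝔄, hAn, rfl⟩, ?_⟩
  have h1 : dist p.1 q.1 < ε / (m + 3) :=
    lt_of_le_of_lt (le_max_left _ _ |>.trans_eq Prod.dist_eq.symm) hdq
  have h2 : dist p.2 q.2 < ε / (m + 3) :=
    lt_of_le_of_lt (le_max_right _ _ |>.trans_eq Prod.dist_eq.symm) hdq
  have h3 : dist v (A p.2) ≤ m * dist p.2 q.2 := by
    rw [← hAv, dist_comm, dist_eq_norm, dist_eq_norm, ← map_sub]
    exact (A.le_opNorm _).trans (mul_le_mul_of_nonneg_right hAn (norm_nonneg _))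
  have h4 : dist v (A p.2) ≤ m * (ε / (m+3)) := h3.trans (by nlinarith)
  have htri := dist_triangle4 p.1 q.1 v (A p.2)
  have hsum : dist p.1 (A p.2) < ε / (m+3) + ε / (m+3) + m * (ε/(m+3)) := by nlinarith
  have heq : ε / (m+3) + ε / (m+3) + m * (ε/(m+3)) = (2+m) * (ε/(m+3)) := by ring
  have hle : (2+m) * (ε/(m+3)) ≤ (m+3) * (ε/(m+3)) :=
    mul_le_mul_of_nonneg_right (by linarith) hε'.le
  have hcan : (m+3) * (ε/(m+3)) = ε := mul_div_cancel₀ ε (by linarith)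
  linarith

lemma iter_surj {𝔄 : Subalgebra 𝕜 (X →L[𝕜] X)} (hclosed : IsClosed (𝔄 : Set (X →L[𝕜] X)))
    (N : Submodule 𝕜 X) (hinvN : ∀ A ∈ 𝔄, ∀ v ∈ N, A v ∈ N)
    (t : X) (ht : t ∈ N) (K : ℝ) (hK : 0 ≤ K)
    (h : ∀ v ∈ N, ∃ A ∈ 𝔄, ‖A‖ ≤ K * ‖v‖ ∧ ‖A t - v‖ ≤ ‖v‖ / 2) :
    ∀ v ∈ N, ∃ B ∈ 𝔄, B t = v ∧ ‖B‖ ≤ 2 * K * ‖v‖ := by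
  intro v hv
  set f : ↥N → (X →L[𝕜] X) := fun u => (h u u.2).choose with hf
  have hf𝔄 : ∀ u : ↥N, f u ∈ 𝔄 := fun u => (h u u.2).choose_spec.1
  have hfn : ∀ u : ↥N, ‖f u‖ ≤ K * ‖(u : X)‖ := fun u => (h u u.2).choose_spec.2.1
  have hfe : ∀ u : ↥N, ‖(f u) t - (u : X)‖ ≤ ‖(u : X)‖ / 2 := fun u => (h u u.2).choose_spec.2.2
  set s : ℕ → ↥N := fun k =>
    Nat.rec (⟨v, hv⟩ : ↥N)
      (fun _ u => ⟨(u : X) - f u t, sub_mem u.2 (hinvN _ (hf𝔄 u) t ht)⟩) k with hs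
  have hs0 : (s 0 : X) = v := rfl
  have hssucc : ∀ k, (s (k+1) : X) = (s k : X) - f (s k) t := fun k => rfl
  have hnorm : ∀ k, ‖(s k : X)‖ ≤ ‖v‖ * (1/2)^k := by
    intro k
    induction k with
    | zero => simp [hs0]
    | succ k ih =>
      have : ‖(s (k+1) : X)‖ ≤ ‖(s k : X)‖ / 2 := by
        rw [hssucc k, norm_sub_rev]; exact hfe (s k)
      calc ‖(s (k+1) : X)‖ ≤ ‖(s k : X)‖ / 2 := this
        _ ≤ (‖v‖ * (1/2)^k) / 2 := by linarith
        _ = ‖v‖ * (1/2)^(k+1) := by ring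
  set A : ℕ → (X →L[𝕜] X) := fun k => f (s k) with hA
  have hAn : ∀ k, ‖A k‖ ≤ (K * ‖v‖) * (1/2)^k := by
    intro k
    calc ‖A k‖ ≤ K * ‖(s k : X)‖ := hfn (s k)
      _ ≤ K * (‖v‖ * (1/2)^k) := mul_le_mul_of_nonneg_left (hnorm k) hK
      _ = (K * ‖v‖) * (1/2)^k := by ring
  have hgsum : Summable (fun k : ℕ => (K * ‖v‖) * (1/2:ℝ)^k) := summable_geometric_two.mul_left _
  have hAsum : Summable A := Summable.of_norm_bounded hgsum hAn
  set B := ∑' k, A k with hB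
  have hBsum : HasSum A B := hAsum.hasSum
  have hpart := hBsum.tendsto_sum_nat
  have hB𝔄 : B ∈ 𝔄 := by
    refine hclosed.mem_of_tendsto hpart (Filter.Eventually.of_forall fun n => ?_)
    exact Subalgebra.sum_mem 𝔄 (fun k _ => hf𝔄 _)
  have htel : ∀ n, (∑ k ∈ Finset.range n, A k) t = v - (s n : X) := by
    intro n
    induction n with
    | zero => simp [hs0]
    | succ n ih =>
      rw [Finset.sum_range_succ, ContinuousLinearMap.add_apply, ih, hssucc n]
      abel
  have h1 : Tendsto (fun n => (∑ k ∈ Finset.range n, A k) t) atTop (𝓝 (B t)) := by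
    have := (hBsum.mapL (ContinuousLinearMap.apply 𝕜 X t)).tendsto_sum_nat
    simpa using this
  have h2 : Tendsto (fun n => (∑ k ∈ Finset.range n, A k) t) atTop (𝓝 v) := by
    simp only [htel]
    have hz : Tendsto (fun n => (s n : X)) atTop (𝓝 0) := by
      apply squeeze_zero_norm hnorm
      have := tendsto_pow_atTop_nhds_zero_of_lt_one (by norm_num : (0:ℝ) ≤ 1/2)
        (by norm_num : (1/2:ℝ) < 1)
      simpa using this.const_mul ‖v‖
    simpa using tendsto_const_nhds.sub hz
  have hBt : B t = v := tendsto_nhds_unique h1 h2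
  refine ⟨B, hB𝔄, hBt, ?_⟩
  have hnorms : Summable fun k => ‖A k‖ :=
    Summable.of_nonneg_of_le (fun k => norm_nonneg _) hAn hgsum
  calc ‖B‖ ≤ ∑' k, ‖A k‖ := norm_tsum_le_tsum_norm hnorms
    _ ≤ ∑' k, (K * ‖v‖) * (1/2:ℝ)^k := Summable.tsum_le_tsum hAn hnorms hgsum
    _ = (K * ‖v‖) * 2 := by rw [tsum_mul_left, tsum_geometric_two]
    _ = 2 * K * ‖v‖ := by ring

end aux

set_option maxHeartbeats 2000000 in
set_option synthInstance.maxHeartbeats 400000 in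
/-- Let `X` be a Banach space and `𝔄` a unital, norm-closed, strictly semi-transitive
subalgebra of `L(X)`.  Then every `𝔄`-invariant linear subspace `Y` of `X` (not assumed
closed) is closed, and moreover `Y = 𝔄x` for some `x ∈ X`. -/
theorem stmt_14 {𝕜 X : Type*} [RCLike 𝕜]
    [NormedAddCommGroup X] [NormedSpace 𝕜 X] [CompleteSpace X]
    (𝔄 : Subalgebra 𝕜 (X →L[𝕜] X))
    (hclosed : IsClosed (𝔄 : Set (X →L[𝕜] X)))
    (hsst : ∀ x y : X, x ≠ 0 → y ≠ 0 → ∃ A ∈ 𝔄, A x = y ∨ A y = x)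
    (Y : Submodule 𝕜 X)
    (hinv : ∀ A ∈ 𝔄, ∀ v ∈ Y, A v ∈ Y) :
    IsClosed (Y : Set X) ∧ ∃ x : X, (Y : Set X) = {y : X | ∃ A ∈ 𝔄, A x = y} := by
  by_cases hbot : Y = ⊥
  · subst hbot
    constructor
    · simpa using isClosed_singleton
    · refine ⟨0, ?_⟩
      ext v
      simp only [Submodule.bot_coe, Set.mem_singleton_iff, Set.mem_setOf_eq]
      constructor
      · rintro rfl; exact ⟨1, 𝔄.one_mem, by simp⟩
      · rintro ⟨A, hA, rfl⟩; simp
  · -- main case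
    obtain ⟨y₀, hy₀Y, hy₀ne⟩ := Submodule.exists_mem_ne_zero_of_ne_bot hbot
    set N := Y.topologicalClosure with hN
    have hNcoe : (N : Set X) = closure (Y : Set X) := Y.topologicalClosure_coe
    have hNc : IsClosed (N : Set X) := Y.isClosed_topologicalClosure
    haveI : CompleteSpace N := hNc.completeSpace_coe
    have hYN : Y ≤ N := Y.le_topologicalClosure
    have hinvN : ∀ A ∈ 𝔄, ∀ v ∈ N, A v ∈ N := by
      intro A hA v hv
      have hv' : v ∈ closure (Y : Set X) := by rw [← hNcoe]; exact hv
      have : A v ∈ closure (Y : Set X) :=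
        map_mem_closure A.continuous hv' (fun y hy => hinv A hA y hy)
      rw [← hNcoe] at this; exact this
    set n₀ : ↥N := ⟨y₀, hYN hy₀Y⟩ with hn₀
    have hn₀ne : n₀ ≠ 0 := by
      intro h
      exact hy₀ne (by simpa [hn₀] using congrArg Subtype.val h)
    -- every ball in N contains a nonzero point
    have hballne : ∀ (c : ↥N) (ε : ℝ), 0 < ε → ∃ u ∈ ball c ε, u ≠ 0 := by
      intro c ε hε
      have hn₀pos : 0 < ‖n₀‖ := norm_pos_iff.2 hn₀ne
      by_cases hc : c = 0
      · subst hc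
        have hqpos : 0 < ε / (2 * ‖n₀‖) := by positivity
        refine ⟨((↑(ε / (2 * ‖n₀‖)) : 𝕜)) • n₀, ?_, ?_⟩
        · rw [mem_ball, dist_eq_norm, sub_zero, norm_smul, RCLike.norm_ofReal,
            abs_of_pos hqpos, div_mul_eq_mul_div, div_lt_iff₀ (by positivity)]
          nlinarith
        · exact smul_ne_zero (by
            simp only [ne_eq, RCLike.ofReal_eq_zero]
            exact ne_of_gt hqpos) hn₀ne
      · exact ⟨c, mem_ball_self hε, hc⟩
    -- the key dichotomy
    by_cases hG : ∃ w : ↥N, w ≠ 0 ∧ ∃ q : ℕ,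
        (interior {v : ↥N | (v : X) ∈ closure (ReachSet 𝔄 (q:ℝ) (w : X))}).Nonempty
    · -- G case : build the orbit
      obtain ⟨w, hwne, q, v₀, hv₀⟩ := hG
      obtain ⟨ρ, hρ, hballC⟩ := Metric.mem_nhds_iff.1 (mem_interior_iff_mem_nhds.1 hv₀)
      -- Step 1 : small ball at 0 consists of approximately reachable points
      have hB0 : ∀ u : ↥N, ‖u‖ < ρ/2 → ∀ ε > 0, ∃ A ∈ 𝔄, ‖A‖ ≤ (q:ℝ) ∧
          ‖A (w:X) - (u:X)‖ < ε := by
        intro u hu ε hε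
        have hmem1 : v₀ + (2:𝕜) • u ∈ {v : ↥N | (v : X) ∈ closure (ReachSet 𝔄 (q:ℝ) (w:X))} := by
          apply hballC
          have hsimp : v₀ + (2:𝕜) • u - v₀ = (2:𝕜) • u := by abel
          rw [mem_ball, dist_eq_norm, hsimp, norm_smul]
          have : ‖(2:𝕜)‖ = 2 := by
            simpa using RCLike.norm_ofNat (K := 𝕜) 2
          rw [this]; linarith
        have hmem2 : v₀ ∈ {v : ↥N | (v : X) ∈ closure (ReachSet 𝔄 (q:ℝ) (w:X))} :=
          hballC (mem_ball_self hρ)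
        rcases Metric.mem_closure_iff.1 hmem1 ε hε with ⟨a, ⟨A₁, hA₁, hA₁n, hA₁v⟩, hd₁⟩
        rcases Metric.mem_closure_iff.1 hmem2 ε hε with ⟨b, ⟨A₂, hA₂, hA₂n, hA₂v⟩, hd₂⟩
        refine ⟨(2:𝕜)⁻¹ • (A₁ - A₂), 𝔄.smul_mem (𝔄.sub_mem hA₁ hA₂) _, ?_, ?_⟩
        · rw [norm_smul ((2:𝕜)⁻¹) (A₁ - A₂), norm_inv]
          have h2 : ‖(2:𝕜)‖ = 2 := by simpa using RCLike.norm_ofNat (K := 𝕜) 2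
          rw [h2]
          have : ‖A₁ - A₂‖ ≤ 2 * q := by
            calc ‖A₁ - A₂‖ ≤ ‖A₁‖ + ‖A₂‖ := norm_sub_le _ _
              _ ≤ 2 * q := by linarith
          calc (2:ℝ)⁻¹ * ‖A₁ - A₂‖ ≤ 2⁻¹ * (2 * q) :=
              mul_le_mul_of_nonneg_left this (by norm_num)
            _ = q := by ring
        · have hcoe1 : ((v₀ + (2:𝕜) • u : ↥N) : X) = (v₀ : X) + (2:𝕜) • (u : X) := by
            push_cast; ring_nf
          have key : ((2:𝕜)⁻¹ • (A₁ - A₂)) (w:X) - (u:X)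
              = (2:𝕜)⁻¹ • ((A₁ (w:X) - ((v₀:X) + (2:𝕜) • (u:X))) - (A₂ (w:X) - (v₀:X))) := by
            simp only [ContinuousLinearMap.smul_apply, ContinuousLinearMap.sub_apply]
            module
          rw [key, norm_smul ((2:𝕜)⁻¹) _, norm_inv]
          have h2 : ‖(2:𝕜)‖ = 2 := by simpa using RCLike.norm_ofNat (K := 𝕜) 2
          rw [h2]
          have e1 : ‖A₁ (w:X) - ((v₀:X) + (2:𝕜) • (u:X))‖ < ε := by
            rw [← hcoe1]
            have : dist ((v₀ + (2:𝕜) • u : ↥N) : X) a < ε := hd₁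
            rw [← hA₁v, dist_eq_norm] at this
            rw [norm_sub_rev]; exact this
          have e2 : ‖A₂ (w:X) - (v₀:X)‖ < ε := by
            have : dist ((v₀ : ↥N) : X) b < ε := hd₂
            rw [← hA₂v, dist_eq_norm] at this
            rw [norm_sub_rev]; exact this
          calc (2:ℝ)⁻¹ * ‖(A₁ (w:X) - ((v₀:X) + (2:𝕜) • (u:X))) - (A₂ (w:X) - (v₀:X))‖
              ≤ 2⁻¹ * (‖A₁ (w:X) - ((v₀:X) + (2:𝕜) • (u:X))‖ + ‖A₂ (w:X) - (v₀:X)‖) :=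
                mul_le_mul_of_nonneg_left (norm_sub_le _ _) (by norm_num)
            _ < 2⁻¹ * (ε + ε) := by
                apply mul_lt_mul_of_pos_left (by linarith) (by norm_num)
            _ = ε := by ring
      -- Step (rescaling)
      set K₀ : ℝ := 4 * ((q:ℝ)+1) / ρ with hK₀
      have hK₀pos : 0 < K₀ := by positivity
      have habs : ∀ u ∈ N, ∀ ε > 0, ∃ A ∈ 𝔄, ‖A‖ ≤ K₀ * ‖u‖ ∧ ‖A (w:X) - u‖ < ε := by
        intro u hu ε hε
        by_cases hu0 : u = 0
        · subst hu0
          exact ⟨0, 𝔄.zero_mem, by simp, by simpa using hε⟩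
        · have hupos : 0 < ‖u‖ := norm_pos_iff.2 hu0
          set t : ℝ := ρ / (4 * ‖u‖) with htdef
          have htpos : 0 < t := by positivity
          set u' : ↥N := ⟨((t:𝕜)) • u, N.smul_mem _ hu⟩ with hu'
          have hu'coe : ((u' : ↥N) : X) = ((t:𝕜)) • u := rfl
          have hu'normeq : ‖u'‖ = t * ‖u‖ := by
            rw [Submodule.coe_norm, hu'coe, norm_smul, RCLike.norm_ofReal, abs_of_pos htpos]
          have hu'norm : ‖u'‖ < ρ/2 := by
            rw [hu'normeq, htdef, div_mul_eq_mul_div, div_lt_iff₀ (by positivity)]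
            nlinarith
          obtain ⟨A', hA', hA'n, hA'e⟩ := hB0 u' hu'norm (t * ε) (by positivity)
          refine ⟨((t:𝕜))⁻¹ • A', 𝔄.smul_mem hA' _, ?_, ?_⟩
          · rw [norm_smul (((t:𝕜))⁻¹) A', norm_inv, RCLike.norm_ofReal, abs_of_pos htpos]
            calc t⁻¹ * ‖A'‖ ≤ t⁻¹ * q := mul_le_mul_of_nonneg_left hA'n (by positivity)
              _ = (4 * ‖u‖ / ρ) * q := by rw [htdef]; field_simp
              _ ≤ K₀ * ‖u‖ := by
                  rw [hK₀, div_mul_eq_mul_div, div_mul_eq_mul_div]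
                  exact (div_le_div_iff_of_pos_right hρ).mpr (by nlinarith [norm_nonneg u])
          · have key : (((t:𝕜))⁻¹ • A') (w:X) - u = ((t:𝕜))⁻¹ • (A' (w:X) - ((u':↥N):X)) := by
              simp only [ContinuousLinearMap.smul_apply, hu']
              rw [smul_sub, smul_smul, inv_mul_cancel₀, one_smul]
              simp only [ne_eq, RCLike.ofReal_eq_zero]
              exact ne_of_gt htpos
            rw [key, norm_smul, norm_inv, RCLike.norm_ofReal, abs_of_pos htpos]
            calc t⁻¹ * ‖A' (w:X) - ((u':↥N):X)‖ < t⁻¹ * (t * ε) :=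
                mul_lt_mul_of_pos_left hA'e (by positivity)
              _ = ε := by field_simp
      have hstep2 : ∀ v ∈ N, ∃ A ∈ 𝔄, ‖A‖ ≤ K₀ * ‖v‖ ∧ ‖A (w:X) - v‖ ≤ ‖v‖ / 2 := by
        intro v hv
        by_cases hv0 : v = 0
        · subst hv0; exact ⟨0, 𝔄.zero_mem, by simp, by simp⟩
        · obtain ⟨A, hA, hAn, hAe⟩ := habs v hv (‖v‖/2)
            (by have := norm_pos_iff.2 hv0; positivity)
          exact ⟨A, hA, hAn, hAe.le⟩
      have hwN : (w:X) ∈ N := w.2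
      have hsurj := iter_surj hclosed N hinvN (w:X) hwN K₀ hK₀pos.le hstep2
      set K₁ : ℝ := 2 * K₀ with hK₁
      have hK₁pos : 0 < K₁ := by positivity
      have hwcl : (w:X) ∈ closure (Y:Set X) := by rw [← hNcoe]; exact hwN
      obtain ⟨y, hyY, hyd⟩ := Metric.mem_closure_iff.1 hwcl (1/(2*K₁)) (by positivity)
      have hyY' : y ∈ Y := hyY
      have hyN : y ∈ N := hYN hyY'
      have hystep : ∀ v ∈ N, ∃ A ∈ 𝔄, ‖A‖ ≤ K₁ * ‖v‖ ∧ ‖A y - v‖ ≤ ‖v‖ / 2 := by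
        intro v hv
        obtain ⟨B, hB, hBw, hBn⟩ := hsurj v hv
        have hBn' : ‖B‖ ≤ K₁ * ‖v‖ := by rw [hK₁, mul_assoc]; rw [mul_assoc] at hBn; exact hBn
        refine ⟨B, hB, hBn', ?_⟩
        have hrw : B y - v = B (y - (w:X)) := by rw [map_sub, hBw]
        have hyd' : ‖y - (w:X)‖ ≤ 1/(2*K₁) := by
          rw [← dist_eq_norm, dist_comm]
          exact hyd.le
        rw [hrw]
        calc ‖B (y - (w:X))‖ ≤ ‖B‖ * ‖y - (w:X)‖ := B.le_opNorm _
          _ ≤ (K₁ * ‖v‖) * (1/(2*K₁)) :=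
              mul_le_mul hBn' hyd' (norm_nonneg _) (mul_nonneg hK₁pos.le (norm_nonneg _))
          _ = ‖v‖ * (K₁ / (2*K₁)) := by ring
          _ = ‖v‖/2 := by
              rw [mul_comm (2:ℝ) K₁, div_mul_eq_div_div, div_self hK₁pos.ne', one_div]
              rfl
      have hysurj := iter_surj hclosed N hinvN y hyN K₁ hK₁pos.le hystep
      have hYeqN : (Y : Set X) = (N : Set X) := by
        apply Set.Subset.antisymm
        · exact fun a ha => hYN ha
        · intro v hv
          obtain ⟨B, hB, hBy, -⟩ := hysurj v hv
          rw [← hBy]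
          exact hinv B hB y hyY'
      constructor
      · rw [hYeqN]; exact hNc
      · refine ⟨y, ?_⟩
        ext v
        simp only [SetLike.mem_coe, Set.mem_setOf_eq]
        constructor
        · intro hvY
          obtain ⟨B, hB, hBy, -⟩ := hysurj v (hYN hvY)
          exact ⟨B, hB, hBy⟩
        · rintro ⟨A, hA, rfl⟩
          exact hinv A hA y hyY'
    · exfalso
      haveI : Nonempty (↥N × ↥N) := ⟨(0, 0)⟩
      have hRelc : ∀ m : ℕ, IsClosed {p : X × X | p.1 ∈ closure (ReachSet 𝔄 (m:ℝ) p.2)} :=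
        fun m => isClosed_rel 𝔄 m (Nat.cast_nonneg m)
      have hc1 : Continuous (fun p : ↥N × ↥N => ((p.1 : X), (p.2 : X))) :=
        (continuous_subtype_val.comp continuous_fst).prodMk
          (continuous_subtype_val.comp continuous_snd)
      have hc2 : Continuous (fun p : ↥N × ↥N => ((p.2 : X), (p.1 : X))) :=
        (continuous_subtype_val.comp continuous_snd).prodMk
          (continuous_subtype_val.comp continuous_fst)
      set F : Option ℕ → Set (↥N × ↥N) := fun i =>
        Option.elim i {p | p.1 = 0 ∨ p.2 = 0} (fun m =>
          (fun p : ↥N × ↥N => ((p.1 : X), (p.2 : X))) ⁻¹'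
              {p : X × X | p.1 ∈ closure (ReachSet 𝔄 (m:ℝ) p.2)} ∪
            (fun p : ↥N × ↥N => ((p.2 : X), (p.1 : X))) ⁻¹'
              {p : X × X | p.1 ∈ closure (ReachSet 𝔄 (m:ℝ) p.2)}) with hF
      have hFc : ∀ i, IsClosed (F i) := by
        rintro (_|m)
        · exact (isClosed_eq continuous_fst continuous_const).union
            (isClosed_eq continuous_snd continuous_const)
        · exact ((hRelc m).preimage hc1).union ((hRelc m).preimage hc2)
      have hFu : ⋃ i, F i = univ := by
        rw [Set.eq_univ_iff_forall]
        intro p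
        rw [Set.mem_iUnion]
        by_cases h1 : p.1 = 0
        · exact ⟨none, Or.inl h1⟩
        by_cases h2 : p.2 = 0
        · exact ⟨none, Or.inr h2⟩
        have h1' : (p.1 : X) ≠ 0 := by simpa using h1
        have h2' : (p.2 : X) ≠ 0 := by simpa using h2
        obtain ⟨A, hA, hcase⟩ := hsst (p.1 : X) (p.2 : X) h1' h2'
        refine ⟨some ⌈‖A‖⌉₊, ?_⟩
        rcases hcase with h | h
        · exact Or.inr (subset_closure ⟨A, hA, Nat.le_ceil _, h⟩)
        · exact Or.inl (subset_closure ⟨A, hA, Nat.le_ceil _, h⟩)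
      have hdense := dense_iUnion_interior_of_closed hFc hFu
      obtain ⟨p, hp⟩ := hdense.nonempty
      rw [Set.mem_iUnion] at hp
      obtain ⟨i, hpi⟩ := hp
      obtain ⟨ε, hε, hball⟩ := Metric.mem_nhds_iff.1 (mem_interior_iff_mem_nhds.1 hpi)
      obtain ⟨w₀, hw₀b, hw₀ne⟩ := hballne p.1 ε hε
      obtain ⟨z₀, hz₀b, hz₀ne⟩ := hballne p.2 ε hε
      have hmemball : ∀ a ∈ ball p.1 ε, ∀ b ∈ ball p.2 ε, ((a, b) : ↥N × ↥N) ∈ ball p ε := by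
        intro a ha b hb
        have : ((a, b) : ↥N × ↥N) ∈ ball (p.1, p.2) ε := by
          rw [← ball_prod_same]; exact Set.mk_mem_prod ha hb
        exact this
      cases i with
      | none =>
        have hmem : (w₀, z₀) ∈ F none := hball (hmemball w₀ hw₀b z₀ hz₀b)
        rcases hmem with h | h
        · exact hw₀ne h
        · exact hz₀ne h
      | some m =>
        have hw₀pos : 0 < ‖w₀‖ := norm_pos_iff.2 hw₀ne
        have hz₀pos : 0 < ‖z₀‖ := norm_pos_iff.2 hz₀ne
        have hw₀d : dist w₀ p.1 < ε := mem_ball.1 hw₀b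
        have hz₀d : dist z₀ p.2 < ε := mem_ball.1 hz₀b
        set δ : ℝ := min (min (ε - dist w₀ p.1) (ε - dist z₀ p.2)) (min ‖w₀‖ ‖z₀‖) with hδdef
        have hδpos : 0 < δ := by
          apply lt_min (lt_min (by linarith) (by linarith)) (lt_min hw₀pos hz₀pos)
        have hwsub : ball w₀ δ ⊆ ball p.1 ε := by
          apply ball_subset_ball'
          have : δ ≤ ε - dist w₀ p.1 := (min_le_left _ _).trans (min_le_left _ _)
          linarith
        have hzsub : ball z₀ δ ⊆ ball p.2 ε := by
          apply ball_subset_ball'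
          have : δ ≤ ε - dist z₀ p.2 := (min_le_left _ _).trans (min_le_right _ _)
          linarith
        have hz_ne : ∀ z ∈ ball z₀ δ, z ≠ 0 := by
          intro z hz h0
          have h1 : dist z z₀ < δ := mem_ball.1 hz
          have h2 : δ ≤ ‖z₀‖ := (min_le_right _ _).trans (min_le_right _ _)
          rw [h0, dist_zero_left] at h1
          linarith
        have hdisj : ∀ w ∈ ball w₀ δ, ∀ z ∈ ball z₀ δ,
            (w:X) ∈ closure (ReachSet 𝔄 (m:ℝ) (z:X)) ∨
              (z:X) ∈ closure (ReachSet 𝔄 (m:ℝ) (w:X)) := by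
          intro w hw z hz
          have hmem : (w, z) ∈ F (some m) := hball (hmemball w (hwsub hw) z (hzsub hz))
          rcases hmem with h | h
          · exact Or.inl h
          · exact Or.inr h
        have hKey : ∀ z ∈ ball z₀ δ, (z:X) ∈ closure (ReachSet 𝔄 (m:ℝ) (w₀:X)) := by
          intro z hz
          have hCc : IsClosed {v : ↥N | (v:X) ∈ closure (ReachSet 𝔄 (m:ℝ) (z:X))} :=
            (hRelc m).preimage (continuous_subtype_val.prodMk continuous_const)
          have hCi : interior {v : ↥N | (v:X) ∈ closure (ReachSet 𝔄 (m:ℝ) (z:X))} = ∅ := by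
            rcases Set.eq_empty_or_nonempty
              (interior {v : ↥N | (v:X) ∈ closure (ReachSet 𝔄 (m:ℝ) (z:X))}) with h | h
            · exact h
            · exact absurd ⟨z, hz_ne z hz, m, h⟩ hG
          have hΦc : IsClosed {v : ↥N | (z:X) ∈ closure (ReachSet 𝔄 (m:ℝ) (v:X))} :=
            (hRelc m).preimage (continuous_const.prodMk continuous_subtype_val)
          have hsub : ball w₀ δ ∩ {v : ↥N | (v:X) ∈ closure (ReachSet 𝔄 (m:ℝ) (z:X))}ᶜ ⊆
              {v : ↥N | (z:X) ∈ closure (ReachSet 𝔄 (m:ℝ) (v:X))} := by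
            rintro v ⟨hv1, hv2⟩
            exact (hdisj v hv1 z hz).resolve_left hv2
          have hdc : Dense ({v : ↥N | (v:X) ∈ closure (ReachSet 𝔄 (m:ℝ) (z:X))}ᶜ) :=
            interior_eq_empty_iff_dense_compl.1 hCi
          have hclsub : w₀ ∈ closure (ball w₀ δ ∩
              {v : ↥N | (v:X) ∈ closure (ReachSet 𝔄 (m:ℝ) (z:X))}ᶜ) := by
            rw [_root_.mem_closure_iff]
            intro o ho hwo
            have hne : (o ∩ ball w₀ δ).Nonempty := ⟨w₀, hwo, mem_ball_self hδpos⟩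
            have := hdc.inter_open_nonempty _ (ho.inter isOpen_ball) hne
            rwa [Set.inter_assoc] at this
          have := closure_mono hsub hclsub
          rw [hΦc.closure_eq] at this
          exact this
        refine hG ⟨w₀, hw₀ne, m, z₀, ?_⟩
        rw [mem_interior]
        exact ⟨ball z₀ δ, hKey, isOpen_ball, mem_ball_self hδpos⟩
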